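/- arXiv:1409.2446 — 4 statements merged into one kernel-verified Lean document; each statement's English description precedes it below -/
import Mathlib

section
/- Let t > 0 be real and let r ≥ 1 be an integer. For 0 ≤ ν ≤ r define x_ν = ν√t / √(r² + ν²). Then for every integer ν with 0 ≤ ν ≤ r − 1, one has √t/(2√2 · r) ≤ x_{ν+1} − x_ν ≤ √t / r. -/
open Real

/-- `x_ν = ν√t / √(r² + ν²)`. -/
noncomputable def critPt (t : ℝ) (r ν : ℕ) : ℝ :=
  (ν : ℝ) * Real.sqrt t / Real.sqrt ((r : ℝ)^2 + (ν : ℝ)^2)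

theorem critPt_gaps (t : ℝ) (ht : 0 < t) (r : ℕ) (hr : 1 ≤ r) :
    ∀ ν : ℕ, ν ≤ r - 1 →
      Real.sqrt t / (2 * Real.sqrt 2 * (r : ℝ)) ≤ critPt t r (ν + 1) - critPt t r ν ∧
        critPt t r (ν + 1) - critPt t r ν ≤ Real.sqrt t / (r : ℝ) := by
  intro ν hν
  have hr1 : (1:ℝ) ≤ (r:ℝ) := by exact_mod_cast hr
  have hrpos : (0:ℝ) < (r:ℝ) := lt_of_lt_of_le one_pos hr1
  have ht' : 0 ≤ Real.sqrt t := Real.sqrt_nonneg t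
  set f : ℝ → ℝ := fun x => x * Real.sqrt t / Real.sqrt ((r:ℝ)^2 + x^2) with hf
  -- derivative computation
  have hderiv : ∀ x : ℝ, HasDerivAt f
      (Real.sqrt t * (r:ℝ)^2 / (Real.sqrt ((r:ℝ)^2 + x^2))^3) x := by
    intro x
    have hpos : 0 < (r:ℝ)^2 + x^2 := by positivity
    have hs : 0 < Real.sqrt ((r:ℝ)^2 + x^2) := Real.sqrt_pos.2 hpos
    have hsq : (Real.sqrt ((r:ℝ)^2 + x^2))^2 = (r:ℝ)^2 + x^2 := Real.sq_sqrt hpos.le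
    have h1 : HasDerivAt (fun y : ℝ => (r:ℝ)^2 + y^2) (2 * x) x := by
      simpa using ((hasDerivAt_pow 2 x).const_add ((r:ℝ)^2))
    have h2 : HasDerivAt (fun y : ℝ => Real.sqrt ((r:ℝ)^2 + y^2))
        (1 / (2 * Real.sqrt ((r:ℝ)^2 + x^2)) * (2 * x)) x :=
      (Real.hasDerivAt_sqrt hpos.ne').comp x h1
    have h3 : HasDerivAt (fun y : ℝ => y * Real.sqrt t) (Real.sqrt t) x := by
      simpa using (hasDerivAt_id x).mul_const (Real.sqrt t)
    have h4 := h3.div h2 hs.ne'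
    have hnum : Real.sqrt t * Real.sqrt ((r:ℝ)^2 + x^2) -
        x * Real.sqrt t * (1 / (2 * Real.sqrt ((r:ℝ)^2 + x^2)) * (2 * x)) =
        Real.sqrt t * (r:ℝ)^2 / Real.sqrt ((r:ℝ)^2 + x^2) := by
      field_simp
      linear_combination hsq
    refine HasDerivAt.congr_deriv h4 ?_
    rw [hnum, div_div]
    congr 1
    rw [pow_succ, pow_two]
    ring
  have hfc : ∀ x : ℝ, f x = x * Real.sqrt t / Real.sqrt ((r:ℝ)^2 + x^2) := fun _ => rfl
  -- interval
  have hνr : (ν:ℝ) + 1 ≤ (r:ℝ) := by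
    have : ν + 1 ≤ r := by omega
    exact_mod_cast this
  set D : Set ℝ := Set.Icc (ν:ℝ) ((ν:ℝ) + 1) with hD
  have hconv : Convex ℝ D := convex_Icc _ _
  have hdiff : ∀ x : ℝ, DifferentiableAt ℝ f x := fun x => (hderiv x).differentiableAt
  have hcont : ContinuousOn f D := fun x _ => (hdiff x).continuousAt.continuousWithinAt
  have hdiffOn : DifferentiableOn ℝ f (interior D) :=
    fun x _ => (hdiff x).differentiableWithinAt
  -- bounds on the derivative on D
  have hbound : ∀ x ∈ D, Real.sqrt t / (2 * Real.sqrt 2 * (r:ℝ)) ≤ deriv f x ∧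
      deriv f x ≤ Real.sqrt t / (r:ℝ) := by
    intro x hx
    have hx0 : 0 ≤ x := le_trans (Nat.cast_nonneg ν) hx.1
    have hxr : x ≤ (r:ℝ) := le_trans hx.2 hνr
    have hpos : 0 < (r:ℝ)^2 + x^2 := by positivity
    have hs : 0 < Real.sqrt ((r:ℝ)^2 + x^2) := Real.sqrt_pos.2 hpos
    have hsq : (Real.sqrt ((r:ℝ)^2 + x^2))^2 = (r:ℝ)^2 + x^2 := Real.sq_sqrt hpos.le
    have hd : deriv f x = Real.sqrt t * (r:ℝ)^2 / (Real.sqrt ((r:ℝ)^2 + x^2))^3 :=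
      (hderiv x).deriv
    have hsr : (r:ℝ) ≤ Real.sqrt ((r:ℝ)^2 + x^2) := by
      have h := Real.sqrt_le_sqrt (show (r:ℝ)^2 ≤ (r:ℝ)^2 + x^2 by nlinarith)
      simpa [Real.sqrt_sq hrpos.le] using h
    have hsr2 : Real.sqrt ((r:ℝ)^2 + x^2) ≤ Real.sqrt 2 * (r:ℝ) := by
      have h := Real.sqrt_le_sqrt (show (r:ℝ)^2 + x^2 ≤ 2 * (r:ℝ)^2 by nlinarith)
      rwa [Real.sqrt_mul (by norm_num : (0:ℝ) ≤ 2), Real.sqrt_sq hrpos.le] at h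
    have h2 : (0:ℝ) < Real.sqrt 2 := by positivity
    constructor
    · rw [hd]
      have hcube : (Real.sqrt ((r:ℝ)^2 + x^2))^3 ≤ (Real.sqrt 2 * (r:ℝ))^3 :=
        pow_le_pow_left₀ hs.le hsr2 3
      have h23 : (Real.sqrt 2 * (r:ℝ))^3 = 2 * Real.sqrt 2 * (r:ℝ)^3 := by
        have h22 : Real.sqrt 2 ^ 2 = 2 := Real.sq_sqrt (by norm_num)
        rw [mul_pow, pow_succ, h22]
      have key : Real.sqrt t / (2 * Real.sqrt 2 * (r:ℝ)) =
          Real.sqrt t * (r:ℝ)^2 / (2 * Real.sqrt 2 * (r:ℝ)^3) := by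
        field_simp
      rw [key]
      exact div_le_div_of_nonneg_left (by positivity) (by positivity) (h23 ▸ hcube)
    · rw [hd]
      have key : Real.sqrt t / (r:ℝ) = Real.sqrt t * (r:ℝ)^2 / (r:ℝ)^3 := by
        field_simp
      rw [key]
      exact div_le_div_of_nonneg_left (by positivity) (by positivity)
        (pow_le_pow_left₀ hrpos.le hsr 3)
  have hmemν : (ν:ℝ) ∈ D := ⟨le_refl _, by linarith⟩
  have hmemν1 : (ν:ℝ) + 1 ∈ D := ⟨by linarith, le_refl _⟩
  have hle : (ν:ℝ) ≤ (ν:ℝ) + 1 := by linarith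
  have hlow := hconv.mul_sub_le_image_sub_of_le_deriv hcont hdiffOn
    (fun x hx => (hbound x (interior_subset hx)).1) (ν:ℝ) hmemν ((ν:ℝ)+1) hmemν1 hle
  have hhigh := hconv.image_sub_le_mul_sub_of_deriv_le hcont hdiffOn
    (fun x hx => (hbound x (interior_subset hx)).2) (ν:ℝ) hmemν ((ν:ℝ)+1) hmemν1 hle
  have e1 : critPt t r ν = f (ν:ℝ) := rfl
  have e2 : critPt t r (ν+1) = f ((ν:ℝ)+1) := by
    rw [hf]; unfold critPt; push_cast; ring_nf
  rw [e1, e2]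
  constructor
  · simpa using hlow
  · simpa using hhigh
end

section
/- There exists a constant C > 0 such that the following holds. Let t ≥ 2 be real and let r be an integer with 1 ≤ r ≤ √t / 2. For 1 ≤ ν ≤ r define x_ν = ν√t / √(r² + ν²), y_ν = r√t / √(r² + ν²), m_ν = ⌊ν x_ν⌋ / ν (the largest rational number with denominator ν that is at most x_ν), n_ν = √(t − m_ν²), and λ_ν = x_ν − m_ν. Then for every integer ν with 1 ≤ ν ≤ r, | n_ν − y_ν − (ν/r)·λ_ν | ≤ C / (√t · ν²). -/
open Real

/-- `y_ν = r√t / √(r² + ν²)`. -/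
noncomputable def critVal (t : ℝ) (r ν : ℕ) : ℝ :=
  (r : ℝ) * Real.sqrt t / Real.sqrt ((r : ℝ)^2 + (ν : ℝ)^2)

/-- `m_ν = ⌊ν x_ν⌋ / ν`, the largest rational with denominator `ν` that is at most `x_ν`. -/
noncomputable def ratPt (t : ℝ) (r ν : ℕ) : ℝ :=
  (⌊(ν : ℝ) * critPt t r ν⌋ : ℝ) / (ν : ℝ)

/-- `n_ν = √(t − m_ν²)`. -/
noncomputable def ratVal (t : ℝ) (r ν : ℕ) : ℝ :=
  Real.sqrt (t - (ratPt t r ν)^2)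

/-- `λ_ν = x_ν − m_ν`. -/
noncomputable def critDiff (t : ℝ) (r ν : ℕ) : ℝ :=
  critPt t r ν - ratPt t r ν

theorem ratVal_approx :
    ∃ C : ℝ, 0 < C ∧ ∀ t : ℝ, 2 ≤ t → ∀ r : ℕ, 1 ≤ r → (r : ℝ) ≤ Real.sqrt t / 2 →
      ∀ ν : ℕ, 1 ≤ ν → ν ≤ r →
        |ratVal t r ν - critVal t r ν - ((ν : ℝ) / (r : ℝ)) * critDiff t r ν|
          ≤ C / (Real.sqrt t * (ν : ℝ)^2) := by
  refine ⟨3, by norm_num, ?_⟩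
  intro t ht r hr hrt ν hν hνr
  have ht0 : (0:ℝ) < t := by linarith
  have hst : 0 < Real.sqrt t := Real.sqrt_pos.mpr ht0
  have hst2 : Real.sqrt t ^ 2 = t := Real.sq_sqrt ht0.le
  have hν0 : (0:ℝ) < ν := by exact_mod_cast hν
  have hr0 : (0:ℝ) < r := by exact_mod_cast hr
  have hνr' : (ν:ℝ) ≤ r := by exact_mod_cast hνr
  set w := Real.sqrt ((r:ℝ)^2 + (ν:ℝ)^2) with hwdef
  have hw0 : 0 < w := Real.sqrt_pos.mpr (by positivity)
  have hw2 : w^2 = (r:ℝ)^2 + (ν:ℝ)^2 := Real.sq_sqrt (by positivity)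
  clear_value w
  set x := critPt t r ν with hxdef
  set m := ratPt t r ν with hmdef
  set y := critVal t r ν with hydef
  set n := ratVal t r ν with hndef
  set l := critDiff t r ν with hldef
  have hxval : x = (ν:ℝ) * Real.sqrt t / w := by rw [hxdef, critPt, hwdef]
  have hyval : y = (r:ℝ) * Real.sqrt t / w := by rw [hydef, critVal, hwdef]
  have hl : l = x - m := rfl
  have hx0 : 0 < x := by rw [hxval]; positivity
  have hy0 : 0 < y := by rw [hyval]; positivity
  have hx2 : x^2 = (ν:ℝ)^2 * t / w^2 := by
    rw [hxval, div_pow, mul_pow, hst2]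
  have hy2 : y^2 = (r:ℝ)^2 * t / w^2 := by
    rw [hyval, div_pow, mul_pow, hst2]
  have hxy : x^2 + y^2 = t := by
    rw [hx2, hy2, hw2]; field_simp; ring
  -- m bounds
  have hm0 : 0 ≤ m := by
    rw [hmdef, ratPt]
    apply div_nonneg _ hν0.le
    exact_mod_cast Int.floor_nonneg.mpr (by positivity)
  have hmx : m ≤ x := by
    rw [hmdef, ratPt, div_le_iff₀ hν0]
    calc (⌊(ν:ℝ) * critPt t r ν⌋ : ℝ) ≤ (ν:ℝ) * critPt t r ν := Int.floor_le _
    _ = x * ν := by rw [← hxdef]; ring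
  have hl0 : 0 ≤ l := by rw [hl]; linarith
  have hlν : l * (ν:ℝ) ≤ 1 := by
    have h1 := Int.lt_floor_add_one ((ν:ℝ) * critPt t r ν)
    rw [← hxdef] at h1
    have h2 : m * ν = (⌊(ν:ℝ) * x⌋ : ℝ) := by
      rw [hmdef, ratPt, ← hxdef, div_mul_cancel₀ _ hν0.ne']
    rw [hl]
    linarith [h1, h2]
  -- n facts
  have hm2x2 : m^2 ≤ x^2 := pow_le_pow_left₀ hm0 hmx 2
  have htm : 0 ≤ t - m^2 := by linarith [sq_nonneg y]
  have hn2 : n^2 = t - m^2 := Real.sq_sqrt htm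
  have hn0 : 0 ≤ n := Real.sqrt_nonneg _
  clear_value x m y n l
  clear hxdef hmdef hydef hndef hldef
  have hyn : y ≤ n := by
    have h : y^2 ≤ n^2 := by rw [hn2]; linarith [hm2x2, hxy]
    exact le_of_pow_le_pow_left₀ two_ne_zero hn0 h
  -- x/y = ν/r
  have hxyr : (ν:ℝ) / (r:ℝ) = x / y := by
    rw [hxval, hyval]
    field_simp
  -- key identity
  have hkey : ((n - y) * y - x * l) * (n + y)^2 = -(l^2 * (y*n + y^2 + x^2 + x*m)) := by
    rw [hl]
    linear_combination (x*m - x^2 + y^2 + n*y) * hn2 - (x*m - x^2 + y^2 + n*y) * hxy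
  have hny0 : 0 < n + y := by linarith
  have hD0 : 0 < y * (n + y)^2 := mul_pos hy0 (pow_pos hny0 2)
  have hT : n - y - (ν:ℝ)/(r:ℝ) * l = -(l^2 * (y*n + y^2 + x^2 + x*m)) / (y * (n+y)^2) := by
    rw [hxyr, eq_div_iff (ne_of_gt hD0)]
    calc (n - y - x / y * l) * (y * (n + y) ^ 2)
        = (n - y) * y * (n+y)^2 - (x / y * y) * (l * (n + y) ^ 2) := by ring
      _ = ((n - y) * y - x * l) * (n + y)^2 := by rw [div_mul_cancel₀ _ hy0.ne']; ring
      _ = -(l^2 * (y*n + y^2 + x^2 + x*m)) := hkey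
  -- bounds
  have hxs : x ≤ Real.sqrt t := (Real.le_sqrt hx0.le ht0.le).mpr (by linarith [sq_nonneg y])
  have hys : y ≤ Real.sqrt t := (Real.le_sqrt hy0.le ht0.le).mpr (by linarith [sq_nonneg x])
  have hns : n ≤ Real.sqrt t := (Real.le_sqrt hn0 ht0.le).mpr (by rw [hn2]; linarith [sq_nonneg m])
  have hyn_t : y * n ≤ t := by
    calc y * n ≤ Real.sqrt t * Real.sqrt t := mul_le_mul hys hns hn0 hst.le
      _ = t := Real.mul_self_sqrt ht0.le
  have hxm_t : x * m ≤ x^2 := by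
    calc x * m ≤ x * x := mul_le_mul_of_nonneg_left hmx hx0.le
      _ = x^2 := (pow_two x).symm
  have hNle : y*n + y^2 + x^2 + x*m ≤ 3 * t := by
    linarith [hyn_t, hxm_t, hxy, sq_nonneg y]
  have hN0 : 0 ≤ y*n + y^2 + x^2 + x*m := by
    have h1 := mul_nonneg hy0.le hn0
    have h2 := mul_nonneg hx0.le hm0
    linarith [sq_nonneg y, sq_nonneg x]
  -- y² ≥ t/2 since ν ≤ r
  have hy2half : t / 2 ≤ y^2 := by
    rw [hy2, hw2, le_div_iff₀ (by positivity)]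
    have hν2r2 : (ν:ℝ)^2 ≤ (r:ℝ)^2 := pow_le_pow_left₀ hν0.le hνr' 2
    have hprod : 0 ≤ ((r:ℝ)^2 - (ν:ℝ)^2) * t := mul_nonneg (by linarith) ht0.le
    linarith [hprod]
  have h2y : Real.sqrt t ≤ 2 * y := by
    have h := Real.sqrt_le_sqrt (show t ≤ (2*y)^2 by rw [mul_pow]; linarith [hy2half])
    rwa [Real.sqrt_sq (by positivity)] at h
  have hy3 : t * Real.sqrt t ≤ 4 * y^3 := by
    calc t * Real.sqrt t ≤ t * (2*y) := mul_le_mul_of_nonneg_left h2y ht0.le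
      _ ≤ (2*y^2) * (2*y) := by
          apply mul_le_mul_of_nonneg_right (by linarith [hy2half]) (by positivity)
      _ = 4 * y^3 := by ring
  have hD : t * Real.sqrt t ≤ y * (n+y)^2 := by
    have h1 : 4*y^2 ≤ (n+y)^2 := by
      have hprod : 0 ≤ (n - y) * (n + 3*y) := mul_nonneg (by linarith) (by linarith)
      linarith [hprod]
    calc t * Real.sqrt t ≤ 4 * y^3 := hy3
      _ = y * (4*y^2) := by ring
      _ ≤ y * (n+y)^2 := mul_le_mul_of_nonneg_left h1 hy0.le
  have habs : |(-(l^2 * (y*n + y^2 + x^2 + x*m))) / (y * (n+y)^2)| =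
      (l^2 * (y*n + y^2 + x^2 + x*m)) / (y * (n+y)^2) := by
    rw [abs_div, abs_neg, abs_of_nonneg (mul_nonneg (sq_nonneg l) hN0),
      abs_of_nonneg hD0.le]
  rw [hT, habs, div_le_div_iff₀ hD0 (mul_pos hst (pow_pos hν0 2))]
  have hl2ν : l^2 * (ν:ℝ)^2 ≤ 1 := by
    have h0 : 0 ≤ l * ν := mul_nonneg hl0 hν0.le
    have hprod : 0 ≤ (1 - l*ν) * (1 + l*ν) := mul_nonneg (by linarith) (by linarith)
    linarith [hprod]
  calc l^2 * (y*n + y^2 + x^2 + x*m) * (Real.sqrt t * (ν:ℝ)^2)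
      = (l^2 * (ν:ℝ)^2) * ((y*n + y^2 + x^2 + x*m) * Real.sqrt t) := by ring
    _ ≤ 1 * ((y*n + y^2 + x^2 + x*m) * Real.sqrt t) :=
        mul_le_mul_of_nonneg_right hl2ν (mul_nonneg hN0 hst.le)
    _ = (y*n + y^2 + x^2 + x*m) * Real.sqrt t := one_mul _
    _ ≤ (3 * t) * Real.sqrt t := mul_le_mul_of_nonneg_right hNle hst.le
    _ = 3 * (t * Real.sqrt t) := by ring
    _ ≤ 3 * (y * (n+y)^2) := by linarith [hD]
end

section
/- There exists a constant C > 0 such that the following holds. Let t ≥ 2 be real and let r be an integer with 1 ≤ r ≤ √t / 2. For 1 ≤ ν ≤ r define x_ν = ν√t / √(r² + ν²), y_ν = r√t / √(r² + ν²), m_ν = ⌊ν x_ν⌋ / ν, and n_ν = √(t − m_ν²). Then for every integer ν with 1 ≤ ν ≤ r, | exp(2πi(r·y_ν + ν·x_ν)) − exp(2πi·r·n_ν) | ≤ C·r / (ν² √t). -/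
open Real Complex

lemma abs_exp_mul_I_sub_one_le (w : ℝ) :
    ‖Complex.exp ((w : ℂ) * Complex.I) - 1‖ ≤ |w| := by
  have h1 : Complex.exp ((w : ℂ) * Complex.I) - 1
      = ((Real.cos w - 1 : ℝ) : ℂ) + ((Real.sin w : ℝ) : ℂ) * Complex.I := by
    rw [Complex.exp_mul_I]
    push_cast [Complex.ofReal_cos, Complex.ofReal_sin]
    ring
  rw [h1, Complex.norm_add_mul_I]
  rw [← Real.sqrt_sq_eq_abs]
  apply Real.sqrt_le_sqrt
  have h2 : Real.sin (w/2) ^ 2 ≤ (w/2) ^ 2 := Real.sin_sq_le_sq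
  have h3 : Real.sin (w/2) ^ 2 + Real.cos (w/2) ^ 2 = 1 := Real.sin_sq_add_cos_sq _
  have h4 : Real.cos w = Real.cos (w/2) ^ 2 - Real.sin (w/2) ^ 2 := by
    have := Real.cos_two_mul' (w/2)
    rwa [show 2 * (w/2) = w by ring] at this
  have h5 : Real.sin w ^ 2 + Real.cos w ^ 2 = 1 := Real.sin_sq_add_cos_sq _
  nlinarith [h2, h3, h4, h5]

lemma abs_exp_mul_I_sub_exp_mul_I_le (u v : ℝ) :
    ‖Complex.exp ((u : ℂ) * Complex.I) - Complex.exp ((v : ℂ) * Complex.I)‖ ≤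
      |u - v| := by
  have h1 : Complex.exp ((u : ℂ) * Complex.I) - Complex.exp ((v : ℂ) * Complex.I)
      = Complex.exp ((v : ℂ) * Complex.I) *
        (Complex.exp ((((u - v : ℝ)) : ℂ) * Complex.I) - 1) := by
    rw [mul_sub, ← Complex.exp_add, mul_one]
    push_cast
    ring_nf
  rw [h1, norm_mul, Complex.norm_exp_ofReal_mul_I, one_mul]
  exact abs_exp_mul_I_sub_one_le _

set_option maxHeartbeats 1000000 in
theorem exp_phase_approx :
    ∃ C : ℝ, 0 < C ∧ ∀ t : ℝ, 2 ≤ t → ∀ r : ℕ, 1 ≤ r → (r : ℝ) ≤ Real.sqrt t / 2 →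
      ∀ ν : ℕ, 1 ≤ ν → ν ≤ r →
        Norm.norm
            (Complex.exp (2 * (Real.pi : ℂ) * Complex.I *
                (((r : ℝ) * critVal t r ν + (ν : ℝ) * critPt t r ν : ℝ) : ℂ)) -
              Complex.exp (2 * (Real.pi : ℂ) * Complex.I * (((r : ℝ) * ratVal t r ν : ℝ) : ℂ)))
          ≤ C * (r : ℝ) / ((ν : ℝ)^2 * Real.sqrt t) := by
  refine ⟨256, by norm_num, ?_⟩
  intro t ht r hr _ ν hν hνr
  have ht0 : (0:ℝ) < t := by linarith
  set a := Real.sqrt t with ha_def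
  have ha : 0 < a := Real.sqrt_pos.2 ht0
  have ha2 : a ^ 2 = t := Real.sq_sqrt ht0.le
  set s := Real.sqrt ((r:ℝ)^2 + (ν:ℝ)^2) with hs_def
  have hr1 : (1:ℝ) ≤ (r:ℝ) := by exact_mod_cast hr
  have hν1 : (1:ℝ) ≤ (ν:ℝ) := by exact_mod_cast hν
  have hνr' : (ν:ℝ) ≤ (r:ℝ) := by exact_mod_cast hνr
  have hν0 : (0:ℝ) < (ν:ℝ) := by linarith
  have hr0 : (0:ℝ) < (r:ℝ) := by linarith
  have hs : 0 < s := Real.sqrt_pos.2 (by positivity)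
  have hs2 : s ^ 2 = (r:ℝ)^2 + (ν:ℝ)^2 := Real.sq_sqrt (by positivity)
  have hνs : (ν:ℝ) ≤ s := by
    nlinarith [hs2, hs, hν0]
  have hrs : (r:ℝ) ≤ s := by
    nlinarith [hs2, hs, hr0]
  have hs2r : s ≤ 2 * (r:ℝ) := by
    nlinarith [hs2, hs, hr0]
  set x := critPt t r ν with hx_def
  set y := critVal t r ν with hy_def
  set m := ratPt t r ν with hm_def
  set n := ratVal t r ν with hn_def
  have hx_eq : x = (ν:ℝ) * a / s := rfl
  have hy_eq : y = (r:ℝ) * a / s := rfl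
  have hx_pos : 0 < x := by rw [hx_eq]; positivity
  have hy_pos : 0 < y := by rw [hy_eq]; positivity
  have hxy : x ^ 2 + y ^ 2 = t := by
    have e : x ^ 2 + y ^ 2 = ((r:ℝ)^2 + (ν:ℝ)^2) * a^2 / s^2 := by
      rw [hx_eq, hy_eq]; ring
    rw [e, hs2, ha2]
    field_simp
  have h1 : (ν:ℝ) * y = (r:ℝ) * x := by rw [hx_eq, hy_eq]; ring
  have hx_le : x ≤ a := by
    rw [hx_eq, div_le_iff₀ hs, mul_comm (ν:ℝ) a]
    exact mul_le_mul_of_nonneg_left hνs ha.le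
  have hy_le : y ≤ a := by
    rw [hy_eq, div_le_iff₀ hs, mul_comm (r:ℝ) a]
    exact mul_le_mul_of_nonneg_left hrs ha.le
  have hy_ge : a / 2 ≤ y := by
    rw [hy_eq, le_div_iff₀ hs]
    calc a / 2 * s ≤ a / 2 * (2 * (r:ℝ)) := by
          exact mul_le_mul_of_nonneg_left hs2r (by positivity)
      _ = (r:ℝ) * a := by ring
  -- floor facts
  have hm_eq : m = (⌊(ν:ℝ) * x⌋ : ℝ) / (ν:ℝ) := rfl
  have hm_nonneg : 0 ≤ m := by
    rw [hm_eq]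
    apply div_nonneg _ hν0.le
    exact_mod_cast Int.floor_nonneg.2 (by positivity)
  have hm_le : m ≤ x := by
    rw [hm_eq, div_le_iff₀ hν0]
    have := Int.floor_le ((ν:ℝ) * x)
    linarith [this]
  have hd1 : (x - m) * (ν:ℝ) ≤ 1 := by
    rw [hm_eq]
    have h := Int.lt_floor_add_one ((ν:ℝ) * x)
    have e : (x - (⌊(ν:ℝ)*x⌋:ℝ)/(ν:ℝ)) * (ν:ℝ) = (ν:ℝ)*x - (⌊(ν:ℝ)*x⌋:ℝ) := by
      rw [sub_mul, div_mul_cancel₀ _ hν0.ne', mul_comm]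
    rw [e]
    linarith
  have hνm : (ν:ℝ) * m = (⌊(ν:ℝ) * x⌋ : ℝ) := by
    rw [hm_eq, mul_div_cancel₀ _ hν0.ne']
  -- n facts
  have hm2_le : m ^ 2 ≤ x ^ 2 := by nlinarith [hm_nonneg, hm_le]
  have htm : 0 ≤ t - m ^ 2 := by nlinarith [hxy, hy_pos]
  have hn_eq : n = Real.sqrt (t - m ^ 2) := rfl
  have hn2 : n ^ 2 = t - m ^ 2 := by rw [hn_eq]; exact Real.sq_sqrt htm
  have hn_nonneg : 0 ≤ n := by rw [hn_eq]; positivity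
  have hn_le : n ≤ a := by
    rw [hn_eq, ha_def]
    apply Real.sqrt_le_sqrt
    nlinarith [hm_nonneg]
  -- the key identity
  set d : ℝ := x - m with hd_def
  have hd0 : 0 ≤ d := by simp [hd_def]; linarith
  set D : ℝ := ((r:ℝ) * y + (ν:ℝ) * x) - ((r:ℝ) * n + (ν:ℝ) * m) with hD_def
  set Q : ℝ := x * (x + m) + y * (n + y) with hQ_def
  have h3 : y ^ 2 = t - x ^ 2 := by linarith [hxy]
  have hKEY : D * (y * (y + n) ^ 2) = (r:ℝ) * d ^ 2 * Q := by
    rw [hD_def, hQ_def]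
    linear_combination ((x-m)*(y+n)^2) * h1 + ((r:ℝ)*(x*(x-m) - y*(y+n))) * hn2
      + ((r:ℝ)*(y*(y+n) - x*(x-m))) * h3
      + (-((r:ℝ)*(x*(x+m)+y*(n+y))*(d+x-m))) * hd_def
  have hP : 0 < y * (y + n) ^ 2 := by
    have : 0 < y + n := by linarith
    positivity
  have hQ0 : 0 ≤ Q := by
    rw [hQ_def]
    exact add_nonneg (mul_nonneg hx_pos.le (by linarith)) (mul_nonneg hy_pos.le (by linarith))
  have hD0 : 0 ≤ D := by
    have hR : 0 ≤ (r:ℝ) * d ^ 2 * Q := mul_nonneg (by positivity) hQ0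
    have := hKEY ▸ hR
    exact (mul_nonneg_iff_of_pos_right hP).mp this
  -- bound D
  have hQ4 : Q ≤ 4 * a ^ 2 := by
    rw [hQ_def]
    have b1 : x * (x + m) ≤ a * (2 * a) :=
      mul_le_mul hx_le (by linarith) (by linarith) ha.le
    have b2 : y * (n + y) ≤ a * (2 * a) :=
      mul_le_mul hy_le (by linarith) (by linarith) ha.le
    calc x * (x + m) + y * (n + y) ≤ a * (2*a) + a * (2*a) := add_le_add b1 b2
      _ = 4 * a ^ 2 := by ring
  have hd2ν : d ^ 2 * (ν:ℝ) ^ 2 ≤ 1 := by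
    calc d ^ 2 * (ν:ℝ) ^ 2 = (d * (ν:ℝ)) ^ 2 := by ring
      _ ≤ 1 ^ 2 := by
          apply sq_le_sq'
          · linarith [mul_nonneg hd0 hν0.le]
          · exact hd1
      _ = 1 := one_pow 2
  have hyy : a ^ 3 / 8 ≤ y * (y + n) ^ 2 := by
    have b1 : (a/2) ^ 3 ≤ y ^ 3 := by
      apply pow_le_pow_left₀ (by positivity) hy_ge
    have b2 : y ^ 3 ≤ y * (y + n) ^ 2 := by
      have : y ^ 2 ≤ (y + n) ^ 2 := by
        apply pow_le_pow_left₀ hy_pos.le (by linarith)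
      calc y ^ 3 = y * y ^ 2 := by ring
        _ ≤ y * (y + n) ^ 2 := mul_le_mul_of_nonneg_left this hy_pos.le
    calc a ^ 3 / 8 = (a/2) ^ 3 := by ring
      _ ≤ y ^ 3 := b1
      _ ≤ y * (y + n) ^ 2 := b2
  have hDb : D ≤ 32 * (r:ℝ) / ((ν:ℝ) ^ 2 * a) := by
    rw [le_div_iff₀ (by positivity)]
    have key : (D * ((ν:ℝ)^2 * a)) * (y * (y+n)^2) ≤ (32 * (r:ℝ)) * (y * (y+n)^2) := by
      have e1 : (D * ((ν:ℝ)^2 * a)) * (y * (y+n)^2) = ((r:ℝ) * d^2 * Q) * ((ν:ℝ)^2 * a) := by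
        rw [← hKEY]; ring
      rw [e1]
      have e2 : ((r:ℝ) * d^2 * Q) * ((ν:ℝ)^2 * a) = (r:ℝ) * (d^2 * (ν:ℝ)^2) * Q * a := by ring
      rw [e2]
      have h6 : (r:ℝ) * (d^2 * (ν:ℝ)^2) * Q * a ≤ (r:ℝ) * 1 * (4 * a^2) * a := by
        have hb1 : (r:ℝ) * (d^2 * (ν:ℝ)^2) * Q ≤ (r:ℝ) * 1 * (4 * a^2) := by
          apply mul_le_mul _ hQ4 hQ0 (by positivity)
          exact mul_le_mul_of_nonneg_left hd2ν hr0.le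
        exact mul_le_mul_of_nonneg_right hb1 ha.le
      calc (r:ℝ) * (d^2 * (ν:ℝ)^2) * Q * a ≤ (r:ℝ) * 1 * (4 * a^2) * a := h6
        _ = 32 * (r:ℝ) * (a^3/8) := by ring
        _ ≤ (32 * (r:ℝ)) * (y * (y+n)^2) := by
            apply mul_le_mul_of_nonneg_left hyy (by positivity)
    exact le_of_mul_le_mul_right key hP
  -- reduce the complex exponentials
  have eA : 2 * (Real.pi : ℂ) * Complex.I *
        (((r : ℝ) * critVal t r ν + (ν : ℝ) * critPt t r ν : ℝ) : ℂ)
      = (((2 * Real.pi * ((r:ℝ) * y + (ν:ℝ) * x) : ℝ)) : ℂ) * Complex.I := by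
    rw [← hy_def, ← hx_def]
    push_cast
    ring
  have eB : Complex.exp (2 * (Real.pi : ℂ) * Complex.I * (((r : ℝ) * ratVal t r ν : ℝ) : ℂ))
      = Complex.exp ((((2 * Real.pi * ((r:ℝ) * n + (ν:ℝ) * m) : ℝ)) : ℂ) * Complex.I) := by
    rw [← hn_def]
    have : (((2 * Real.pi * ((r:ℝ) * n + (ν:ℝ) * m) : ℝ)) : ℂ) * Complex.I
        = 2 * (Real.pi : ℂ) * Complex.I * (((r : ℝ) * n : ℝ) : ℂ)
          + (⌊(ν:ℝ) * x⌋ : ℤ) * (2 * (Real.pi : ℂ) * Complex.I) := by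
      rw [show ((ν:ℝ) * m : ℝ) = ((⌊(ν:ℝ) * x⌋ : ℤ) : ℝ) by exact_mod_cast hνm]
      push_cast
      ring
    rw [this, Complex.exp_add, Complex.exp_int_mul_two_pi_mul_I, mul_one]
  rw [eA, eB]
  calc ‖Complex.exp ((((2 * Real.pi * ((r:ℝ) * y + (ν:ℝ) * x) : ℝ)) : ℂ) * Complex.I)
        - Complex.exp ((((2 * Real.pi * ((r:ℝ) * n + (ν:ℝ) * m) : ℝ)) : ℂ) * Complex.I)‖
      ≤ |2 * Real.pi * ((r:ℝ) * y + (ν:ℝ) * x) - 2 * Real.pi * ((r:ℝ) * n + (ν:ℝ) * m)| :=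
        abs_exp_mul_I_sub_exp_mul_I_le _ _
    _ = 2 * Real.pi * D := by
        rw [show 2 * Real.pi * ((r:ℝ) * y + (ν:ℝ) * x) - 2 * Real.pi * ((r:ℝ) * n + (ν:ℝ) * m)
          = 2 * Real.pi * D by rw [hD_def]; ring]
        rw [_root_.abs_of_nonneg (by positivity : (0:ℝ) ≤ 2 * Real.pi * D)]
    _ ≤ 256 * (r:ℝ) / ((ν:ℝ)^2 * a) := by
        have hpi : Real.pi ≤ 4 := by linarith [Real.pi_le_four]
        have h8 : 2 * Real.pi * D ≤ 8 * D :=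
          mul_le_mul_of_nonneg_right (by linarith) hD0
        have : 8 * D ≤ 8 * (32 * (r:ℝ) / ((ν:ℝ)^2 * a)) := by linarith [hDb]
        calc 2 * Real.pi * D ≤ 8 * D := h8
          _ ≤ 8 * (32 * (r:ℝ) / ((ν:ℝ)^2 * a)) := this
          _ = 256 * (r:ℝ) / ((ν:ℝ)^2 * a) := by ring
end

section
/- There exists a constant C > 0 such that for all real t ≥ 2 and all integers r with 1 ≤ r ≤ √t / 2, | Σ_{m=0}^{⌊√(t/2)⌋} exp(2πi·r·√(t − m²)) | ≤ C·( t^(1/4)·√r + r ). -/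
set_option maxHeartbeats 1000000

open Real Complex

noncomputable def ee (x : ℝ) : ℂ := Complex.exp (2 * (Real.pi : ℂ) * Complex.I * (x : ℂ))

lemma ee_sq (x : ℝ) : ee x = ((Real.cos (Real.pi * x) : ℂ) + (Real.sin (Real.pi * x) : ℂ) * Complex.I)^2 := by
  unfold ee
  rw [Complex.ofReal_cos, Complex.ofReal_sin, ← Complex.exp_mul_I, ← Complex.exp_nat_mul]
  push_cast; ring_nf

lemma ee_sub_one_mul (x : ℝ) (hs : Real.sin (Real.pi * x) ≠ 0) :
    (ee x - 1) * ((-1/2 : ℂ) - Complex.I/2 * ((Real.cos (Real.pi * x) / Real.sin (Real.pi * x) : ℝ) : ℂ)) = 1 := by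
  rw [ee_sq, Complex.ofReal_div]
  set c : ℂ := (Real.cos (Real.pi * x) : ℂ) with hcdef
  set s : ℂ := (Real.sin (Real.pi * x) : ℂ) with hsdef
  have hs' : s ≠ 0 := Complex.ofReal_ne_zero.mpr hs
  have hc : c^2 + s^2 = 1 := by
    rw [hcdef, hsdef]; norm_cast; rw [add_comm]; exact Real.sin_sq_add_cos_sq (Real.pi * x)
  field_simp
  linear_combination (s - c*Complex.I) * hc + (-c*s^2*Complex.I - 2*c^2*s - s^3) * Complex.I_sq

lemma ee_abs (x : ℝ) : ‖ee x‖ = 1 := by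
  unfold ee
  rw [show (2 * (Real.pi : ℂ) * Complex.I * (x : ℂ)) = ((2 * Real.pi * x : ℝ) : ℂ) * Complex.I by
    push_cast; ring]
  exact Complex.norm_exp_ofReal_mul_I _

lemma ee_add (x y : ℝ) : ee (x + y) = ee x * ee y := by
  unfold ee; rw [← Complex.exp_add]; push_cast; ring_nf

lemma ee_int (k : ℤ) : ee (k : ℝ) = 1 := by
  unfold ee
  rw [show (2 * (Real.pi : ℂ) * Complex.I * (((k:ℝ) : ℝ) : ℂ)) = (k : ℂ) * (2 * (Real.pi:ℂ) * Complex.I) by push_cast; ring]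
  exact Complex.exp_int_mul_two_pi_mul_I k

/-- For x ∈ [δ, 1-δ], sin(πx) ≥ 2δ. -/
lemma sin_pi_lb {δ x : ℝ} (hδ : 0 < δ) (h1 : δ ≤ x) (h2 : x ≤ 1 - δ) :
    2 * δ ≤ Real.sin (Real.pi * x) := by
  have hδ2 : δ ≤ 1/2 := by linarith
  have key : ∀ y : ℝ, δ ≤ y → y ≤ 1/2 → 2*δ ≤ Real.sin (Real.pi * y) := by
    intro y hy1 hy2
    have h0 : (0:ℝ) ≤ Real.pi * δ := by positivity
    have hle : Real.pi * δ ≤ Real.pi / 2 := by nlinarith [Real.pi_pos]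
    have j := Real.mul_le_sin h0 hle
    have : 2 * δ ≤ Real.sin (Real.pi * δ) := by
      rw [show 2 / Real.pi * (Real.pi * δ) = 2 * δ by field_simp] at j
      exact j
    refine this.trans ?_
    have := Real.strictMonoOn_sin.monotoneOn (a := Real.pi * δ) (b := Real.pi * y)
      ⟨by nlinarith [Real.pi_pos], hle⟩
      ⟨by nlinarith [Real.pi_pos], by nlinarith [Real.pi_pos]⟩
      (by nlinarith [Real.pi_pos])
    exact this
  rcases le_or_gt x (1/2) with hx | hx
  · exact key x h1 hx
  · have := key (1 - x) (by linarith) (by linarith)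
    rwa [show Real.pi * (1 - x) = Real.pi - Real.pi * x by ring, Real.sin_pi_sub] at this

lemma sin_pi_pos {δ x : ℝ} (hδ : 0 < δ) (h1 : δ ≤ x) (h2 : x ≤ 1 - δ) :
    0 < Real.sin (Real.pi * x) := lt_of_lt_of_le (by linarith) (sin_pi_lb hδ h1 h2)

/-- cot(π·) is antitone on [δ, 1-δ]. -/
lemma cot_anti {δ x y : ℝ} (hδ : 0 < δ) (h1 : δ ≤ x) (hxy : x ≤ y) (h2 : y ≤ 1 - δ) :
    Real.cos (Real.pi * y) / Real.sin (Real.pi * y) ≤ Real.cos (Real.pi * x) / Real.sin (Real.pi * x) := by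
  have hsx : 0 < Real.sin (Real.pi * x) := sin_pi_pos hδ h1 (by linarith)
  have hsy : 0 < Real.sin (Real.pi * y) := sin_pi_pos hδ (by linarith) h2
  rw [div_le_div_iff₀ hsy hsx]
  have h0 : 0 ≤ Real.sin (Real.pi * y - Real.pi * x) := by
    apply Real.sin_nonneg_of_nonneg_of_le_pi
    · nlinarith [Real.pi_pos]
    · nlinarith [Real.pi_pos]
  rw [Real.sin_sub] at h0
  nlinarith

/-- |cot(πx)| ≤ 1/(2δ) on [δ, 1-δ]. -/
lemma cot_abs_le {δ x : ℝ} (hδ : 0 < δ) (h1 : δ ≤ x) (h2 : x ≤ 1 - δ) :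
    |Real.cos (Real.pi * x) / Real.sin (Real.pi * x)| ≤ 1 / (2 * δ) := by
  have hs := sin_pi_lb hδ h1 h2
  have hs0 := sin_pi_pos hδ h1 h2
  rw [abs_div, abs_of_pos hs0, div_le_div_iff₀ hs0 (by positivity)]
  have : |Real.cos (Real.pi * x)| ≤ 1 := Real.abs_cos_le_one _
  nlinarith [abs_nonneg (Real.cos (Real.pi * x))]

lemma kuzmin_landau (N : ℕ) (v : ℕ → ℝ) (k : ℤ) (δ : ℝ) (hδ0 : 0 < δ) (hδ1 : δ ≤ 1/2)
    (hlo : ∀ j, j < N → (k:ℝ) + δ ≤ v (j+1) - v j)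
    (hhi : ∀ j, j < N → v (j+1) - v j ≤ (k:ℝ) + 1 - δ)
    (hmono : ∀ i j, i ≤ j → j < N → v (j+1) - v j ≤ v (i+1) - v i) :
    ‖∑ j ∈ Finset.range (N+1), ee (v j)‖ ≤ 3/δ := by
  have h3δ : (2:ℝ) ≤ 1/δ := by rw [le_div_iff₀ hδ0]; linarith
  obtain _ | n := N
  · simp only [zero_add, Finset.range_one, Finset.sum_singleton, ee_abs]
    calc (1:ℝ) ≤ 2 * (1/δ) := by linarith
    _ ≤ 3/δ := by rw [mul_one_div]; gcongr; norm_num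
  set N := n + 1 with hN
  set ψ : ℕ → ℝ := fun j => v (j+1) - v j - k with hψ
  have hψb : ∀ j, j < N → δ ≤ ψ j ∧ ψ j ≤ 1 - δ := by
    intro j hj
    constructor
    · have := hlo j hj; simp only [hψ]; linarith
    · have := hhi j hj; simp only [hψ]; linarith
  set cf : ℕ → ℝ := fun j => Real.cos (Real.pi * ψ j) / Real.sin (Real.pi * ψ j) with hcf
  set w : ℕ → ℂ := fun j => (-1/2 : ℂ) - Complex.I/2 * ((cf j : ℝ) : ℂ) with hw
  set E : ℕ → ℂ := fun j => ee (v j) with hE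
  -- the key identity
  have key : ∀ j, j < N → E j = (E (j+1) - E j) * w j := by
    intro j hj
    obtain ⟨hb1, hb2⟩ := hψb j hj
    have hsin : Real.sin (Real.pi * ψ j) ≠ 0 := ne_of_gt (sin_pi_pos hδ0 hb1 hb2)
    have hstep : E (j+1) = E j * ee (ψ j) := by
      have : v (j+1) = (v j + ψ j) + (k:ℤ) := by simp only [hψ]; push_cast; ring
      simp only [hE, this, ee_add, ee_int, mul_one]
    rw [hstep]
    have := ee_sub_one_mul (ψ j) hsin
    calc E j = E j * ((ee (ψ j) - 1) * w j) := by rw [this]; ring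
    _ = (E j * ee (ψ j) - E j) * w j := by ring
  -- bounds on w
  have habsE : ∀ j, ‖E j‖ = 1 := fun j => ee_abs (v j)
  have hwb : ∀ j, j < N → ‖w j‖ ≤ 1/2 + 1/(4*δ) := by
    intro j hj
    obtain ⟨hb1, hb2⟩ := hψb j hj
    have hc := cot_abs_le hδ0 hb1 hb2
    calc ‖w j‖ ≤ ‖(-1/2 : ℂ)‖ + ‖Complex.I/2 * ((cf j : ℝ):ℂ)‖ := by
          simpa [hw, sub_eq_add_neg] using norm_add_le (-1/2 : ℂ) (-(Complex.I/2 * ((cf j : ℝ):ℂ)))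
    _ = 1/2 + (1/2) * |cf j| := by
          simp only [norm_mul, norm_div, norm_neg, norm_one, Complex.norm_I,
            Complex.norm_real, Real.norm_eq_abs, Complex.norm_two, one_mul]
    _ ≤ 1/2 + (1/2) * (1/(2*δ)) := by gcongr
    _ = 1/2 + 1/(4*δ) := by ring
  -- difference of w's
  have hwdiff : ∀ j, j + 1 < N → ‖w (j+1) - w j‖ = (1/2) * (cf (j+1) - cf j) := by
    intro j hj
    obtain ⟨ha1, ha2⟩ := hψb j (by omega)
    obtain ⟨hb1, hb2⟩ := hψb (j+1) hj
    have hmono' : ψ (j+1) ≤ ψ j := by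
      have := hmono j (j+1) (by omega) hj; simp only [hψ]; linarith
    have hcle : cf j ≤ cf (j+1) := cot_anti hδ0 hb1 hmono' ha2
    have : w (j+1) - w j = -(Complex.I/2) * (((cf (j+1) - cf j : ℝ)) : ℂ) := by
      simp only [hw]; push_cast; ring
    have haux : ‖(-(Complex.I/2))‖ = 1/2 := by
      rw [norm_neg, norm_div, Complex.norm_I]; norm_num
    rw [this, norm_mul, haux, Complex.norm_real, Real.norm_eq_abs,
      _root_.abs_of_nonneg (by linarith : (0:ℝ) ≤ cf (j+1) - cf j)]
  -- Abel summation identity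
  have hsum : (∑ j ∈ Finset.range (N+1), E j) =
      ((E n * w n - E 0 * w 0) - ∑ j ∈ Finset.range n, E (j+1) * (w (j+1) - w j))
      + (E (n+1) - E n) * w n + E N := by
    rw [Finset.sum_range_succ]
    congr 1
    have e1 : (∑ j ∈ Finset.range N, E j) = ∑ j ∈ Finset.range N, (E (j+1) - E j) * w j :=
      Finset.sum_congr rfl (fun j hj => key j (Finset.mem_range.mp hj))
    rw [e1, hN, Finset.sum_range_succ]
    congr 1
    calc ∑ j ∈ Finset.range n, (E (j+1) - E j) * w j
        = ∑ j ∈ Finset.range n,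
            ((E (j+1) * w (j+1) - E j * w j) - E (j+1) * (w (j+1) - w j)) :=
          Finset.sum_congr rfl (fun j _ => by ring)
      _ = (∑ j ∈ Finset.range n, (E (j+1) * w (j+1) - E j * w j))
            - ∑ j ∈ Finset.range n, E (j+1) * (w (j+1) - w j) := Finset.sum_sub_distrib _ _
      _ = (E n * w n - E 0 * w 0) - ∑ j ∈ Finset.range n, E (j+1) * (w (j+1) - w j) := by
          rw [Finset.sum_range_sub (fun j => E j * w j)]
  have hNpos : 0 < N := Nat.succ_pos n
  have hnN : n < N := Nat.lt_succ_self n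
  have hwbnonneg : (0:ℝ) ≤ 1/2 + 1/(4*δ) := by positivity
  have bW0 : ‖E 0 * w 0‖ ≤ 1/2 + 1/(4*δ) := by
    rw [norm_mul, habsE, one_mul]; exact hwb 0 hNpos
  have bWn : ‖E n * w n‖ ≤ 1/2 + 1/(4*δ) := by
    rw [norm_mul, habsE, one_mul]; exact hwb n hnN
  have blast : ‖(E (n+1) - E n) * w n‖ ≤ 2 * (1/2 + 1/(4*δ)) := by
    rw [norm_mul]
    have h1 : ‖E (n+1) - E n‖ ≤ 2 := by
      have h2 := norm_sub_le (E (n+1)) (E n)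
      rw [habsE, habsE] at h2; linarith
    exact mul_le_mul h1 (hwb n hnN) (norm_nonneg _) (by norm_num)
  have bsum : ‖∑ j ∈ Finset.range n, E (j+1) * (w (j+1) - w j)‖
      ≤ (1/2) * (cf n - cf 0) := by
    calc ‖∑ j ∈ Finset.range n, E (j+1) * (w (j+1) - w j)‖
        ≤ ∑ j ∈ Finset.range n, ‖E (j+1) * (w (j+1) - w j)‖ :=
          norm_sum_le _ _
      _ = ∑ j ∈ Finset.range n, ((1/2) * (cf (j+1) - cf j)) := by
          apply Finset.sum_congr rfl
          intro j hj
          rw [norm_mul, habsE, one_mul, hwdiff j (Nat.succ_lt_succ (Finset.mem_range.mp hj))]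
      _ = (1/2) * ∑ j ∈ Finset.range n, (cf (j+1) - cf j) := by rw [Finset.mul_sum]
      _ = (1/2) * (cf n - cf 0) := by rw [Finset.sum_range_sub cf]
  have bcf : cf n - cf 0 ≤ 1/δ := by
    obtain ⟨h01, h02⟩ := hψb 0 hNpos
    obtain ⟨hn1, hn2⟩ := hψb n hnN
    have c0 := cot_abs_le hδ0 h01 h02
    have cn := cot_abs_le hδ0 hn1 hn2
    have := abs_le.mp c0
    have := abs_le.mp cn
    have hd : (1:ℝ)/(2*δ) + 1/(2*δ) = 1/δ := by field_simp; norm_num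
    calc cf n - cf 0 ≤ 1/(2*δ) + 1/(2*δ) := by
          rcases abs_le.mp c0 with ⟨a1, a2⟩; rcases abs_le.mp cn with ⟨b1, b2⟩
          simp only [hcf]; linarith
      _ = 1/δ := hd
  -- final assembly
  rw [hsum]
  have step1 : ‖(((E n * w n - E 0 * w 0) -
        ∑ j ∈ Finset.range n, E (j+1) * (w (j+1) - w j))
        + (E (n+1) - E n) * w n) + E N‖
      ≤ ((1/2 + 1/(4*δ)) + (1/2 + 1/(4*δ)) + (1/2) * (1/δ)) + 2 * (1/2 + 1/(4*δ)) + 1 := by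
    refine le_trans (norm_add_le _ _) ?_
    have i1 : ‖((E n * w n - E 0 * w 0) -
        ∑ j ∈ Finset.range n, E (j+1) * (w (j+1) - w j)) + (E (n+1) - E n) * w n‖
        ≤ ((1/2 + 1/(4*δ)) + (1/2 + 1/(4*δ)) + (1/2) * (1/δ)) + 2 * (1/2 + 1/(4*δ)) := by
      refine le_trans (norm_add_le _ _) (add_le_add ?_ blast)
      refine le_trans (norm_sub_le _ _) ?_
      have i2 : ‖E n * w n - E 0 * w 0‖
          ≤ (1/2 + 1/(4*δ)) + (1/2 + 1/(4*δ)) :=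
        le_trans (norm_sub_le _ _) (by linarith)
      have i3 : (1/2 : ℝ) * (cf n - cf 0) ≤ (1/2) * (1/δ) := by linarith
      linarith
    have i4 : ‖E N‖ = 1 := habsE N
    linarith
  refine le_trans step1 ?_
  -- numeric: 3 + 3/(2δ) ≤ 3/δ given 1/δ ≥ 2
  have h2 : (0:ℝ) < 1/δ := by positivity
  have expand : ((1/2 + 1/(4*δ)) + (1/2 + 1/(4*δ)) + (1/2) * (1/δ)) + 2 * (1/2 + 1/(4*δ)) + 1
      = 3 + (3/2) * (1/δ) := by field_simp; ring
  rw [expand]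
  have : (3:ℝ) ≤ (3/2) * (1/δ) := by linarith
  have e3 : (3:ℝ)/δ = 3 * (1/δ) := by ring
  rw [e3]; linarith

theorem exp_sum_sqrt_estimate :
    ∃ C : ℝ, 0 < C ∧ ∀ t : ℝ, 2 ≤ t → ∀ r : ℕ, 1 ≤ r → (r : ℝ) ≤ Real.sqrt t / 2 →
      ‖
          (∑ m ∈ Finset.range (⌊Real.sqrt (t/2)⌋₊ + 1),
            Complex.exp (2 * (Real.pi : ℂ) * Complex.I *
              (((r : ℝ) * Real.sqrt (t - (m : ℝ)^2) : ℝ) : ℂ)))‖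
        ≤ C * (t ^ ((1:ℝ)/4) * Real.sqrt (r : ℝ) + (r : ℝ)) := by
  refine ⟨14, by norm_num, ?_⟩
  intro t ht r hr hr2
  -- setup
  set st := Real.sqrt t with hst_def
  set st2 := Real.sqrt (t/2) with hst2_def
  set M := ⌊st2⌋₊ with hM_def
  set f : ℝ → ℝ := fun x => (r:ℝ) * Real.sqrt (t - x^2) with hf_def
  set h : ℝ → ℝ := fun x => (r:ℝ) * x / Real.sqrt (t - x^2) with hh_def
  set lam : ℝ := (r:ℝ) / st with hlam_def
  set δ : ℝ := Real.sqrt lam / 2 with hδ_def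
  have ht0 : (0:ℝ) < t := by linarith
  have hst0 : 0 < st := Real.sqrt_pos.mpr ht0
  have hst2nn : 0 ≤ st2 := Real.sqrt_nonneg _
  have hMst2 : (M:ℝ) ≤ st2 := Nat.floor_le hst2nn
  have hst2sq : st2^2 = t/2 := Real.sq_sqrt (by linarith)
  have hr0 : (0:ℝ) < (r:ℝ) := by exact_mod_cast hr
  have hlam0 : 0 < lam := by positivity
  have hlam1 : lam ≤ 1/2 := by
    rw [hlam_def, div_le_iff₀ hst0]; linarith
  have hδ0 : 0 < δ := by positivity
  have hδhalf : δ ≤ 1/2 := by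
    rw [hδ_def]
    have : Real.sqrt lam ≤ 1 := by
      rw [show (1:ℝ) = Real.sqrt 1 by simp]
      exact Real.sqrt_le_sqrt (by linarith)
    linarith
  -- positivity of t - x² on [0, st2]
  have hpos : ∀ x : ℝ, 0 ≤ x → x ≤ st2 → t/2 ≤ t - x^2 := by
    intro x hx0 hx2
    have : x^2 ≤ st2^2 := by nlinarith
    nlinarith
  -- h is monotone on [0, st2]
  have hmono : ∀ x y : ℝ, 0 ≤ x → x ≤ y → y ≤ st2 → h x ≤ h y := by
    intro x y hx0 hxy hy
    have hy2 : t/2 ≤ t - y^2 := hpos y (le_trans hx0 hxy) hy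
    have hsy : 0 < Real.sqrt (t - y^2) := Real.sqrt_pos.mpr (by linarith)
    have hss : Real.sqrt (t - y^2) ≤ Real.sqrt (t - x^2) :=
      Real.sqrt_le_sqrt (by nlinarith)
    exact div_le_div₀ (mul_nonneg hr0.le (le_trans hx0 hxy)) (by nlinarith) hsy hss
  -- expansion property
  have hexp : ∀ x y : ℝ, 0 ≤ x → x ≤ y → y ≤ st2 → lam * (y - x) ≤ h y - h x := by
    intro x y hx0 hxy hy
    have hy2 : t/2 ≤ t - y^2 := hpos y (le_trans hx0 hxy) hy
    have hsy : 0 < Real.sqrt (t - y^2) := Real.sqrt_pos.mpr (by linarith)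
    have hsx : 0 < Real.sqrt (t - x^2) :=
      Real.sqrt_pos.mpr (by nlinarith [hpos x hx0 (le_trans hxy hy)])
    have hss : Real.sqrt (t - y^2) ≤ Real.sqrt (t - x^2) :=
      Real.sqrt_le_sqrt (by nlinarith)
    have hsxst : Real.sqrt (t - x^2) ≤ st := Real.sqrt_le_sqrt (by nlinarith)
    have e1 : (r:ℝ) * y / Real.sqrt (t - x^2) ≤ (r:ℝ) * y / Real.sqrt (t - y^2) :=
      div_le_div_of_nonneg_left (mul_nonneg hr0.le (le_trans hx0 hxy)) hsy hss
    have e2 : (r:ℝ) * (y - x) / st ≤ (r:ℝ) * (y - x) / Real.sqrt (t - x^2) :=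
      div_le_div_of_nonneg_left (by nlinarith) hsx hsxst
    have e3 : lam * (y - x) = (r:ℝ) * (y - x) / st := by
      rw [hlam_def]; ring
    have e4 : (r:ℝ) * (y - x) / Real.sqrt (t - x^2)
        = (r:ℝ) * y / Real.sqrt (t - x^2) - (r:ℝ) * x / Real.sqrt (t - x^2) := by
      ring
    simp only [hh_def]
    rw [e3]
    calc (r:ℝ) * (y - x) / st ≤ (r:ℝ) * (y - x) / Real.sqrt (t - x^2) := e2
      _ = (r:ℝ) * y / Real.sqrt (t - x^2) - (r:ℝ) * x / Real.sqrt (t - x^2) := e4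
      _ ≤ (r:ℝ) * y / Real.sqrt (t - y^2) - (r:ℝ) * x / Real.sqrt (t - x^2) := by linarith
  -- h bounds
  have hhb : ∀ x : ℝ, 0 ≤ x → x ≤ st2 → 0 ≤ h x ∧ h x ≤ (r:ℝ) := by
    intro x hx0 hx2
    have hx2' : t/2 ≤ t - x^2 := hpos x hx0 hx2
    have hsx : 0 < Real.sqrt (t - x^2) := Real.sqrt_pos.mpr (by linarith)
    constructor
    · simp only [hh_def]; positivity
    · simp only [hh_def]
      rw [div_le_iff₀ hsx]
      have hxs : x ≤ Real.sqrt (t - x^2) := by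
        rw [Real.le_sqrt hx0 (by linarith)]
        nlinarith [hpos x hx0 hx2, hst2sq]
      nlinarith
  -- MVT bounds on differences of f
  have hMVT : ∀ x : ℝ, 0 ≤ x → x + 1 ≤ st2 → h x ≤ f x - f (x+1) ∧ f x - f (x+1) ≤ h (x+1) := by
    intro x hx0 hx1
    have hderiv : ∀ y ∈ Set.Ioo x (x+1), HasDerivAt f (-(h y)) y := by
      intro y hy
      have hy0 : 0 ≤ y := le_trans hx0 (le_of_lt hy.1)
      have hyst : y ≤ st2 := le_trans (le_of_lt hy.2) hx1
      have hty : 0 < t - y^2 := by nlinarith [hpos y hy0 hyst]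
      have hsy : 0 < Real.sqrt (t - y^2) := Real.sqrt_pos.mpr hty
      have h1 : HasDerivAt (fun z : ℝ => t - z^2) (-(2*y)) y := by
        have := (hasDerivAt_pow 2 y).const_sub t
        simpa using this
      have h2 : HasDerivAt (fun z : ℝ => Real.sqrt (t - z^2))
          (1 / (2 * Real.sqrt (t - y^2)) * (-(2*y))) y :=
        (Real.hasDerivAt_sqrt (ne_of_gt hty)).comp y h1
      have h3 := h2.const_mul (r:ℝ)
      refine h3.congr_deriv ?_
      show _ = -((r:ℝ) * y / Real.sqrt (t - y^2))
      field_simp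
    have hcont : ContinuousOn f (Set.Icc x (x+1)) := by
      apply Continuous.continuousOn
      exact continuous_const.mul (Real.continuous_sqrt.comp (continuous_const.sub (continuous_pow 2)))
    obtain ⟨c, hc, hceq⟩ := exists_hasDerivAt_eq_slope f (fun y => -(h y))
      (by linarith : x < x + 1) hcont hderiv
    have hceq' : f x - f (x+1) = h c := by
      have : x + 1 - x = 1 := by ring
      rw [this, div_one] at hceq
      linarith
    rw [hceq']
    constructor
    · exact hmono x c hx0 (le_of_lt hc.1) (le_trans (le_of_lt hc.2) hx1)
    · exact hmono c (x+1) (le_trans hx0 (le_of_lt hc.1)) (le_of_lt hc.2) hx1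
  -- integer versions
  have hmonoN : ∀ p q : ℕ, p ≤ q → q ≤ M → h p ≤ h q := by
    intro p q hpq hqM
    exact hmono p q (Nat.cast_nonneg p) (by exact_mod_cast hpq)
      (le_trans (by exact_mod_cast hqM : (q:ℝ) ≤ (M:ℝ)) hMst2)
  have hcastM : ∀ q : ℕ, q ≤ M → (q:ℝ) ≤ st2 := by
    intro q hqM
    exact le_trans (by exact_mod_cast hqM : (q:ℝ) ≤ (M:ℝ)) hMst2
  have hMVTN : ∀ p : ℕ, p + 1 ≤ M →
      h p ≤ f p - f ((p:ℕ)+1 : ℕ) ∧ f p - f ((p:ℕ)+1 : ℕ) ≤ h ((p:ℕ)+1 : ℕ) := by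
    intro p hp
    have hcast : (((p+1 : ℕ)):ℝ) = (p:ℝ) + 1 := by push_cast; ring
    have := hMVT p (Nat.cast_nonneg p) (by rw [← hcast]; exact hcastM (p+1) hp)
    rw [hcast]
    exact this
  -- classification
  set key : ℕ → ℕ := fun m => ⌊h m + δ⌋₊ with hkey_def
  have hkey_le : ∀ m ∈ Finset.range (M+1), key m ∈ Finset.range (r+1) := by
    intro m hm
    rw [Finset.mem_range] at hm ⊢
    have hmM : (m:ℝ) ≤ st2 := le_trans (by exact_mod_cast Nat.lt_succ_iff.mp hm) hMst2
    have hb2 := (hhb m (Nat.cast_nonneg m) hmM).2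
    have hfl : ⌊h (m:ℝ) + δ⌋₊ < r + 1 := by
      rw [Nat.floor_lt (by positivity)]
      push_cast; linarith
    simpa [hkey_def] using hfl
  -- fiber bound
  have fiber_bound : ∀ k ∈ Finset.range (r+1),
      ‖∑ m ∈ (Finset.range (M+1)).filter (fun m => key m = k), ee (f m)‖
        ≤ (2*δ/lam + 1) + 3/δ := by
    intro k hk
    set F := (Finset.range (M+1)).filter (fun m => key m = k) with hF_def
    have hmemF : ∀ m ∈ F, m ≤ M ∧ (k:ℝ) - δ ≤ h m ∧ h m < (k:ℝ) + 1 - δ := by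
      intro m hm
      rw [hF_def, Finset.mem_filter, Finset.mem_range] at hm
      obtain ⟨hm1, hm2⟩ := hm
      have hmM : m ≤ M := Nat.lt_succ_iff.mp hm1
      have hnn : (0:ℝ) ≤ h m + δ := by
        have := (hhb m (Nat.cast_nonneg m) (hcastM m hmM)).1
        linarith
      have hfl : (⌊h (m:ℝ) + δ⌋₊ : ℝ) = (k:ℝ) := by
        exact_mod_cast congrArg (Nat.cast (R := ℝ)) (hm2 : key m = k)
      refine ⟨hmM, ?_, ?_⟩
      · have := Nat.floor_le hnn
        rw [hfl] at this; linarith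
      · have := Nat.lt_floor_add_one (h (m:ℝ) + δ)
        rw [hfl] at this; linarith
    rw [← Finset.sum_filter_add_sum_filter_not F (fun m : ℕ => h (m:ℝ) ≤ (k:ℝ) + δ) (fun m => ee (f m))]
    refine le_trans (norm_add_le _ _) (add_le_add ?_ ?_)
    · -- near-integer block: trivial bound by cardinality
      set A := F.filter (fun m : ℕ => h (m:ℝ) ≤ (k:ℝ) + δ) with hA_def
      have hmemA : ∀ m ∈ A, m ≤ M ∧ (k:ℝ) - δ ≤ h m ∧ h m ≤ (k:ℝ) + δ := by
        intro m hm
        rw [hA_def, Finset.mem_filter] at hm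
        obtain ⟨hm1, hm2⟩ := hm
        obtain ⟨q1, q2, q3⟩ := hmemF m hm1
        exact ⟨q1, q2, hm2⟩
      have cardb : (A.card : ℝ) ≤ 2*δ/lam + 1 := by
        rcases Finset.eq_empty_or_nonempty A with hA | hA
        · simp [hA]; positivity
        · set a := A.min' hA with ha_def
          have haA : a ∈ A := A.min'_mem hA
          have hsub : A ⊆ Finset.Icc a (a + ⌊2*δ/lam⌋₊) := by
            intro m hm
            rw [Finset.mem_Icc]
            have ham : a ≤ m := A.min'_le m hm
            refine ⟨ham, ?_⟩
            obtain ⟨qM, q1, q2⟩ := hmemA m hm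
            obtain ⟨pM, p1, p2⟩ := hmemA a haA
            have hex := hexp a m (Nat.cast_nonneg a) (by exact_mod_cast ham) (hcastM m qM)
            have hle : lam * ((m:ℝ) - (a:ℝ)) ≤ 2*δ := by linarith
            have hcast : ((m - a : ℕ) : ℝ) = (m:ℝ) - (a:ℝ) := by
              push_cast [Nat.cast_sub ham]; ring
            have : ((m - a : ℕ) : ℝ) ≤ 2*δ/lam := by
              rw [hcast, le_div_iff₀ hlam0]; nlinarith
            have := Nat.le_floor this
            omega
          have hcard := Finset.card_le_card hsub
          have hcard2 : A.card ≤ ⌊2*δ/lam⌋₊ + 1 := by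
            have : (Finset.Icc a (a + ⌊2*δ/lam⌋₊)).card = ⌊2*δ/lam⌋₊ + 1 := by
              rw [Nat.card_Icc]; omega
            omega
          calc (A.card : ℝ) ≤ (⌊2*δ/lam⌋₊ : ℝ) + 1 := by exact_mod_cast hcard2
            _ ≤ 2*δ/lam + 1 := by
                have := Nat.floor_le (by positivity : (0:ℝ) ≤ 2*δ/lam)
                linarith
      calc ‖∑ m ∈ A, ee (f m)‖ ≤ ∑ m ∈ A, ‖ee (f m)‖ :=
            norm_sum_le _ _
        _ = (A.card : ℝ) := by
            simp only [ee_abs]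
            rw [Finset.sum_const, nsmul_eq_mul, mul_one]
        _ ≤ 2*δ/lam + 1 := cardb
    · -- Kuzmin-Landau block
      set B := F.filter (fun m : ℕ => ¬ (h (m:ℝ) ≤ (k:ℝ) + δ)) with hB_def
      rcases Finset.eq_empty_or_nonempty B with hB | hB
      · simp [hB]; positivity
      · have hmemB : ∀ m ∈ B, m ≤ M ∧ (k:ℝ) + δ < h m ∧ h m < (k:ℝ) + 1 - δ := by
          intro m hm
          rw [hB_def, Finset.mem_filter] at hm
          obtain ⟨hm1, hm2⟩ := hm
          obtain ⟨q1, q2, q3⟩ := hmemF m hm1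
          exact ⟨q1, not_le.mp hm2, q3⟩
        set a := B.min' hB with ha_def
        set b := B.max' hB with hb_def
        have haB : a ∈ B := B.min'_mem hB
        have hbB : b ∈ B := B.max'_mem hB
        have hab : a ≤ b := B.min'_le b hbB
        have hbM : b ≤ M := (hmemB b hbB).1
        have hfull : ∀ m, a ≤ m → m ≤ b → m ∈ B := by
          intro m h1 h2
          have hmM : m ≤ M := le_trans h2 hbM
          have h_am : h a ≤ h m := hmonoN a m h1 hmM
          have h_mb : h m ≤ h b := hmonoN m b h2 hbM
          have hlo' : (k:ℝ) + δ < h m := lt_of_lt_of_le (hmemB a haB).2.1 h_am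
          have hhi' : h m < (k:ℝ) + 1 - δ := lt_of_le_of_lt h_mb (hmemB b hbB).2.2
          have hkeym : key m = k := by
            simp only [hkey_def]
            rw [Nat.floor_eq_iff (by positivity : (0:ℝ) ≤ h (m:ℝ) + δ)]
            constructor
            · linarith
            · push_cast; linarith
          refine Finset.mem_filter.mpr ⟨Finset.mem_filter.mpr ⟨Finset.mem_range.mpr (by omega), hkeym⟩, ?_⟩
          simp only [not_le]
          exact hlo'
        have hBIcc : B = Finset.Icc a b := by
          apply Finset.ext
          intro m
          constructor
          · intro hm
            exact Finset.mem_Icc.mpr ⟨B.min'_le m hm, B.le_max' m hm⟩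
          · intro hm
            obtain ⟨h1, h2⟩ := Finset.mem_Icc.mp hm
            exact hfull m h1 h2
        rw [hBIcc, ← Finset.Ico_add_one_right_eq_Icc, Finset.sum_Ico_eq_sum_range,
          show b + 1 - a = (b - a) + 1 by omega]
        -- apply Kuzmin-Landau with k' = -(k+1)
        have hKL := kuzmin_landau (b - a) (fun j => f ((a + j : ℕ) : ℝ)) (-(k+1) : ℤ) δ hδ0 hδhalf
          ?_ ?_ ?_
        · exact hKL
        · -- hlo
          intro j hj
          have hj1 : a + j + 1 ≤ b := by omega
          have hm2B : a + j + 1 ∈ B := hfull _ (by omega) hj1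
          have hval := (hmemB (a+j+1) hm2B).2.2
          have hMm := (hMVTN (a+j) (by omega)).2
          push_cast at hval hMm ⊢
          rw [show (a:ℝ) + ((j:ℝ) + 1) = (a:ℝ) + (j:ℝ) + 1 by ring]
          linarith
        · -- hhi
          intro j hj
          have hm1B : a + j ∈ B := hfull _ (by omega) (by omega)
          have hval := (hmemB (a+j) hm1B).2.1
          have hMm := (hMVTN (a+j) (by omega)).1
          push_cast at hval hMm ⊢
          rw [show (a:ℝ) + ((j:ℝ) + 1) = (a:ℝ) + (j:ℝ) + 1 by ring]
          linarith
        · -- monotonicity of differences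
          intro i j hij hj
          rcases eq_or_lt_of_le hij with rfl | hij'
          · exact le_refl _
          · have hMi := (hMVTN (a+i) (by omega)).2
            have hMj := (hMVTN (a+j) (by omega)).1
            have hmid : h ((a+i+1 : ℕ) : ℝ) ≤ h ((a+j : ℕ) : ℝ) :=
              hmonoN (a+i+1) (a+j) (by omega) (by omega)
            push_cast at hMi hMj hmid ⊢
            rw [show (a:ℝ) + ((j:ℝ) + 1) = (a:ℝ) + (j:ℝ) + 1 by ring,
              show (a:ℝ) + ((i:ℝ) + 1) = (a:ℝ) + (i:ℝ) + 1 by ring]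
            linarith
  -- assemble
  have hsum_eq : (∑ m ∈ Finset.range (M+1), ee (f m))
      = ∑ k ∈ Finset.range (r+1), ∑ m ∈ (Finset.range (M+1)).filter (fun m => key m = k), ee (f m) :=
    (Finset.sum_fiberwise_of_maps_to hkey_le _).symm
  have main_est : ‖∑ m ∈ Finset.range (M+1), ee (f m)‖
      ≤ ((r:ℝ)+1) * ((2*δ/lam + 1) + 3/δ) := by
    rw [hsum_eq]
    refine le_trans (norm_sum_le _ _) ?_
    refine le_trans (Finset.sum_le_sum fiber_bound) ?_
    rw [Finset.sum_const, Finset.card_range, nsmul_eq_mul]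
    push_cast
    exact le_refl _
  -- final numeric computation
  have numeric : ((r:ℝ)+1) * ((2*δ/lam + 1) + 3/δ)
      ≤ 14 * (t ^ ((1:ℝ)/4) * Real.sqrt (r:ℝ) + (r:ℝ)) := by
    set sl := Real.sqrt lam with hsl_def
    have hsl : 0 < sl := Real.sqrt_pos.mpr hlam0
    have hslsq : sl ^ 2 = lam := Real.sq_sqrt hlam0.le
    have hr1 : (1:ℝ) ≤ (r:ℝ) := by exact_mod_cast hr
    have e1 : 2*δ/lam + 1 + 3/δ = 7 / sl + 1 := by
      rw [hδ_def, ← hslsq]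
      field_simp
      ring
    have e2 : (r:ℝ) / sl = t ^ ((1:ℝ)/4) * Real.sqrt (r:ℝ) := by
      have h1 : sl = Real.sqrt (r:ℝ) / Real.sqrt st := by
        rw [hsl_def, hlam_def, Real.sqrt_div (Nat.cast_nonneg r)]
      have h2 : Real.sqrt st = t ^ ((1:ℝ)/4) := by
        rw [hst_def, Real.sqrt_eq_rpow, Real.sqrt_eq_rpow, ← Real.rpow_mul ht0.le]
        norm_num
      rw [h1, div_div_eq_mul_div, mul_comm (r:ℝ) (Real.sqrt st), mul_div_assoc,
        Real.div_sqrt, h2]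
    have hpos4 : (0:ℝ) ≤ 7 / sl + 1 := by positivity
    calc ((r:ℝ)+1) * ((2*δ/lam + 1) + 3/δ) = ((r:ℝ)+1) * (7/sl + 1) := by
          rw [show (2*δ/lam + 1) + 3/δ = 2*δ/lam + 1 + 3/δ by ring, e1]
      _ ≤ (2*(r:ℝ)) * (7/sl + 1) := by
          apply mul_le_mul_of_nonneg_right (by linarith) hpos4
      _ = 14 * ((r:ℝ)/sl) + 2*(r:ℝ) := by field_simp; ring
      _ = 14 * (t^((1:ℝ)/4) * Real.sqrt (r:ℝ)) + 2*(r:ℝ) := by rw [e2]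
      _ ≤ 14 * (t^((1:ℝ)/4) * Real.sqrt (r:ℝ) + (r:ℝ)) := by linarith
  exact le_trans main_est numeric
end
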